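/- Let p be an odd prime and let f: ℤ_p → ℤ_p be compatible. The coordinate functions of f satisfy φ_k(x_0,…,x_k) ≡ x_k + α_k(x_0,…,x_{k−1}) (mod p) for all k = 1,2,… (for some functions α_k with values in {0,…,p−1}) if and only if f can be written as f(x) = φ_0(x_0) + (x − x_0) + p·g(x), where x_0 is the first base-p digit of x and g: ℤ_p → ℤ_p is some compatible function. -/

import Mathlib

open MeasureTheory Function

variable {p : ℕ} [hp : Fact p.Prime]

noncomputable instance : MeasurableSpace ℤ_[p] := borel _
instance : BorelSpace ℤ_[p] := ⟨rfl⟩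

/-- The Haar measure on `ℤ_[p]`, normalized so that `μp p ℤ_[p] = 1`. -/
noncomputable def μp (p : ℕ) [Fact p.Prime] : Measure ℤ_[p] :=
  Measure.addHaarMeasure ⊤

/-- A function `f : ℤ_[p] → ℤ_[p]` is compatible if it is 1-Lipschitz w.r.t. `|·|_p`. -/
def Compatible (f : ℤ_[p] → ℤ_[p]) : Prop :=
  ∀ x y : ℤ_[p], ‖f x - f y‖ ≤ ‖x - y‖

/-- The `k`-th base-`p` digit of `x ∈ ℤ_[p]`, as a natural number in `{0,…,p-1}`. -/
noncomputable def digitN (x : ℤ_[p]) (k : ℕ) : ℕ := x.appr (k + 1) / p ^ k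

/-- The `k`-th base-`p` digit of `x ∈ ℤ_[p]`, as an element of `ZMod p`. -/
noncomputable def digit (x : ℤ_[p]) (k : ℕ) : ZMod p := (digitN x k : ZMod p)

/-- `f` has coordinate representation given by the family `φ`: the `k`-th digit of `f x`
is `φ k xb x_k`, where `xb = x mod p^k ∈ {0,…,p^k−1}` encodes the digits `(x_0,…,x_{k-1})`
and `x_k` is the `k`-th digit of `x`. -/
def CoordRep (f : ℤ_[p] → ℤ_[p]) (φ : ℕ → ℕ → ZMod p → ZMod p) : Prop :=
  ∀ (x : ℤ_[p]) (k : ℕ), digit (f x) k = φ k (x.appr k) (digit x k)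

/-- The reduction of `f` modulo `p^k`, acting on natural-number residues `{0,…,p^k−1}`
(for `k = k'+1` this is the map `f_{k'}` on `ℤ/p^k ℤ`). -/
noncomputable def red (f : ℤ_[p] → ℤ_[p]) (k : ℕ) (m : ℕ) : ℕ := (f (m : ℤ_[p])).appr k

/-- A map of `ZMod n` is transitive (a single-cycle permutation) iff every point can be
reached from every point by iteration. -/
def IsTransitive {n : ℕ} (g : ZMod n → ZMod n) : Prop :=
  ∀ a b : ZMod n, ∃ s : ℕ, g^[s] a = b

/-- A self-map of the residues `{0,…,N−1}` is transitive (single cycle). -/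
def TransitiveOn (g : ℕ → ℕ) (N : ℕ) : Prop :=
  ∀ a, a < N → ∀ b, b < N → ∃ s : ℕ, g^[s] a = b

/-- `compSeq ψ g xb n = ψ (g^[n-1] xb) ∘ ⋯ ∘ ψ (g xb) ∘ ψ xb`. -/
def compSeq (ψ : ℕ → ZMod p → ZMod p) (g : ℕ → ℕ) (xb : ℕ) : ℕ → ZMod p → ZMod p
  | 0 => id
  | n + 1 => ψ (g^[n] xb) ∘ compSeq ψ g xb n

/-- The permutation `F_{k,xb} = φ_{k,f_{k-1}^{(p^k-1)}(xb)} ∘ ⋯ ∘ φ_{k,xb}` of `ZMod p`. -/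
noncomputable def Fperm (φ : ℕ → ℕ → ZMod p → ZMod p) (f : ℤ_[p] → ℤ_[p]) (k xb : ℕ) :
    ZMod p → ZMod p :=
  compSeq (φ k) (red f k) xb (p ^ k)

namespace PadicAux


lemma dvd_iff_norm_le (x : ℤ_[p]) (n : ℕ) :
    (p:ℤ_[p])^n ∣ x ↔ ‖x‖ ≤ (p:ℝ)^(-n:ℤ) := by
  rw [PadicInt.norm_le_pow_iff_mem_span_pow, Ideal.mem_span_singleton]

lemma appr_dvd (x : ℤ_[p]) (n : ℕ) : (p:ℤ_[p])^n ∣ x - x.appr n := by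
  have := PadicInt.appr_spec n x; rwa [Ideal.mem_span_singleton] at this

lemma nat_eq_of_dvd {a b : ℕ} (n : ℕ) (ha : a < p^n) (hb : b < p^n)
    (h : (p:ℤ_[p])^n ∣ (a:ℤ_[p]) - b) : a = b := by
  have h' : (p:ℤ_[p])^n ∣ (((a:ℤ) - b : ℤ) : ℤ_[p]) := by push_cast; exact h
  rw [PadicInt.pow_p_dvd_int_iff] at h'
  have habs : |(a:ℤ) - b| < (p:ℤ)^n := by
    have ha' : (a:ℤ) < (p:ℤ)^n := by exact_mod_cast ha
    have hb' : (b:ℤ) < (p:ℤ)^n := by exact_mod_cast hb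
    rw [abs_sub_lt_iff]; omega
  have := Int.eq_zero_of_abs_lt_dvd h' habs
  omega

lemma appr_eq_of_dvd {x y : ℤ_[p]} {n : ℕ} (h : (p:ℤ_[p])^n ∣ x - y) :
    x.appr n = y.appr n := by
  apply nat_eq_of_dvd n (x.appr_lt n) (y.appr_lt n)
  have key : (x.appr n : ℤ_[p]) - y.appr n
      = (x - y) - (x - x.appr n) + (y - y.appr n) := by ring
  rw [key]
  exact dvd_add (dvd_sub h (appr_dvd x n)) (appr_dvd y n)

lemma appr_eq_of {x : ℤ_[p]} {m n : ℕ} (hm : m < p^n)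
    (h : (p:ℤ_[p])^n ∣ x - m) : x.appr n = m := by
  apply nat_eq_of_dvd n (x.appr_lt n) hm
  have key : (x.appr n : ℤ_[p]) - m = (x - m) - (x - x.appr n) := by ring
  rw [key]
  exact dvd_sub h (appr_dvd x n)

lemma pk_pos (k : ℕ) : 0 < p ^ k := pow_pos hp.1.pos k

lemma appr_succ (x : ℤ_[p]) (k : ℕ) :
    x.appr (k+1) = x.appr k + p^k * digitN x k := by
  obtain ⟨c, hc⟩ := PadicInt.dvd_appr_sub_appr x k (k+1) (Nat.le_succ k)
  have hle : x.appr k ≤ x.appr (k+1) := PadicInt.appr_mono x (Nat.le_succ k)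
  have h1 : x.appr (k+1) = x.appr k + p^k * c := by omega
  have hd : digitN x k = c := by
    unfold digitN
    rw [h1, mul_comm, Nat.add_mul_div_right _ _ (pk_pos k),
      Nat.div_eq_of_lt (x.appr_lt k), Nat.zero_add]
  rw [hd, h1]

lemma digitN_lt (x : ℤ_[p]) (k : ℕ) : digitN x k < p := by
  unfold digitN
  rw [Nat.div_lt_iff_lt_mul (pk_pos k)]
  have := x.appr_lt (k+1)
  calc x.appr (k+1) < p^(k+1) := this
  _ = p * p^k := by ring

lemma digitN_eq_of_dvd {x y : ℤ_[p]} {k : ℕ} (h : (p:ℤ_[p])^(k+1) ∣ x - y) :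
    digitN x k = digitN y k := by
  unfold digitN; rw [appr_eq_of_dvd h]

lemma keyE {a b : ℤ_[p]} {k : ℕ} (h : (p:ℤ_[p])^k ∣ a - b) :
    (p:ℤ_[p])^(k+1) ∣ (a - b) - ((digitN a k : ℤ_[p]) - digitN b k) * (p:ℤ_[p])^k := by
  have hab : a.appr k = b.appr k := appr_eq_of_dvd h
  have h1 : (a.appr (k+1) : ℤ_[p]) = (a.appr k : ℤ_[p]) + (p:ℤ_[p])^k * digitN a k := by
    rw [appr_succ]; push_cast; ring
  have h2 : (b.appr (k+1) : ℤ_[p]) = (b.appr k : ℤ_[p]) + (p:ℤ_[p])^k * digitN b k := by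
    rw [appr_succ]; push_cast; ring
  have key : (a - b) - ((digitN a k : ℤ_[p]) - digitN b k) * (p:ℤ_[p])^k
      = (a - a.appr (k+1)) - (b - b.appr (k+1)) + ((a.appr k : ℤ_[p]) - b.appr k) := by
    rw [h1, h2]; ring
  rw [key, hab, sub_self, add_zero]
  exact dvd_sub (appr_dvd a (k+1)) (appr_dvd b (k+1))

lemma dvd_of_compat {f : ℤ_[p] → ℤ_[p]} (hf : Compatible f) {x y : ℤ_[p]} (n : ℕ)
    (h : (p:ℤ_[p])^n ∣ x - y) : (p:ℤ_[p])^n ∣ f x - f y := by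
  rw [dvd_iff_norm_le] at h ⊢
  exact le_trans (hf x y) h

lemma compat_of_dvd {g : ℤ_[p] → ℤ_[p]}
    (h : ∀ (x y : ℤ_[p]) (n : ℕ), (p:ℤ_[p])^n ∣ x - y → (p:ℤ_[p])^n ∣ g x - g y) :
    Compatible g := by
  intro x y
  by_cases hxy : x = y
  · simp [hxy]
  have hne : x - y ≠ 0 := sub_ne_zero.mpr hxy
  set n : ℕ := (x - y).valuation with hn
  have hv : ((n : ℤ)) = (x - y).valuation := rfl
  have hnorm : ‖x - y‖ = (p:ℝ)^(-n:ℤ) := by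
    rw [PadicInt.norm_eq_zpow_neg_valuation hne]
  have hdvd : (p:ℤ_[p])^n ∣ x - y := by
    rw [dvd_iff_norm_le, hnorm]
  rw [hnorm, ← dvd_iff_norm_le]
  exact h x y n hdvd

lemma zmod_of_dvd {z : ℤ} (h : (p:ℤ_[p]) ∣ (z : ℤ_[p])) : (z : ZMod p) = 0 := by
  have h' : (p:ℤ_[p])^1 ∣ (z : ℤ_[p]) := by rwa [pow_one]
  rw [PadicInt.pow_p_dvd_int_iff, pow_one] at h'
  exact (ZMod.intCast_zmod_eq_zero_iff_dvd z p).mpr h'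

lemma dvd_of_zmod {z : ℤ} (h : (z : ZMod p) = 0) : (p:ℤ_[p]) ∣ (z : ℤ_[p]) := by
  have h' : (p:ℤ) ∣ z := (ZMod.intCast_zmod_eq_zero_iff_dvd z p).mp h
  obtain ⟨c, hc⟩ := h'
  exact ⟨(c : ℤ_[p]), by rw [hc]; push_cast; ring⟩


lemma digitN_zero (x : ℤ_[p]) : digitN x 0 = x.appr 1 := by simp [digitN]

lemma keyF {f : ℤ_[p] → ℤ_[p]} {φ : ℕ → ℕ → ZMod p → ZMod p} {α : ℕ → ℕ → ZMod p}
    (hf : Compatible f) (hφ : CoordRep f φ)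
    (hα : ∀ k, 1 ≤ k → ∀ xb, xb < p ^ k → ∀ d : ZMod p, φ k xb d = d + α k xb)
    {x y : ℤ_[p]} {n : ℕ} (hn : 1 ≤ n) (h : (p:ℤ_[p])^n ∣ x - y) :
    (p:ℤ_[p])^(n+1) ∣ (f x - f y) - (x - y) := by
  have hfd : (p:ℤ_[p])^n ∣ f x - f y := dvd_of_compat hf n h
  have E1 := keyE h
  have E2 := keyE hfd
  have happr : x.appr n = y.appr n := appr_eq_of_dvd h
  have hx1 : digit (f x) n = digit x n + α n (x.appr n) := by
    rw [hφ x n, hα n hn _ (x.appr_lt n)]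
  have hy1 : digit (f y) n = digit y n + α n (y.appr n) := by
    rw [hφ y n, hα n hn _ (y.appr_lt n)]
  have hz : (((digitN (f x) n : ℤ) - digitN (f y) n
      - ((digitN x n : ℤ) - digitN y n) : ℤ) : ZMod p) = 0 := by
    push_cast
    show digit (f x) n - digit (f y) n - (digit x n - digit y n) = 0
    rw [hx1, hy1, happr]; ring
  obtain ⟨c, hc⟩ := dvd_of_zmod hz
  have comb : (f x - f y) - (x - y)
      = ((f x - f y) - ((digitN (f x) n : ℤ_[p]) - digitN (f y) n) * (p:ℤ_[p])^n)
        - ((x - y) - ((digitN x n : ℤ_[p]) - digitN y n) * (p:ℤ_[p])^n)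
        + ((((digitN (f x) n : ℤ) - digitN (f y) n
            - ((digitN x n : ℤ) - digitN y n) : ℤ) : ℤ_[p])) * (p:ℤ_[p])^n := by
    push_cast; ring
  rw [comb, hc]
  exact dvd_add (dvd_sub E2 E1) ⟨c, by ring⟩

end PadicAux

/-- For odd `p` and compatible `f`, the coordinate functions satisfy
`φ_k(x̄, x_k) = x_k + α_k(x̄)` for all `k ≥ 1` iff
`f(x) = φ_0(x_0) + (x − x_0) + p·g(x)` for some compatible `g`, where `x_0` is the first
base-`p` digit of `x`. -/
theorem coordinate_translation_iff_affine_form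
    (hp2 : p ≠ 2)
    (f : ℤ_[p] → ℤ_[p]) (φ : ℕ → ℕ → ZMod p → ZMod p)
    (hf : Compatible f) (hφ : CoordRep f φ) :
    (∃ α : ℕ → ℕ → ZMod p,
        ∀ k, 1 ≤ k → ∀ xb, xb < p ^ k → ∀ d : ZMod p, φ k xb d = d + α k xb) ↔
      (∃ g : ℤ_[p] → ℤ_[p], Compatible g ∧
        ∀ x : ℤ_[p],
          f x = ((φ 0 0 (digit x 0)).val : ℤ_[p]) + (x - (x.appr 1 : ℤ_[p])) +
            (p : ℤ_[p]) * g x) := by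
  haveI : NeZero p := ⟨hp.1.ne_zero⟩
  have hpne : (p:ℤ_[p]) ≠ 0 := Nat.cast_ne_zero.mpr hp.1.ne_zero
  constructor
  · rintro ⟨α, hα⟩
    have hD : ∀ x : ℤ_[p], ∃ c : ℤ_[p],
        f x - ((φ 0 0 (digit x 0)).val : ℤ_[p]) - (x - (x.appr 1 : ℤ_[p]))
          = (p:ℤ_[p]) * c := by
      intro x
      have h0 : digit (f x) 0 = φ 0 0 (digit x 0) := by
        have := hφ x 0
        rwa [show x.appr 0 = 0 from rfl] at this
      have hval : (φ 0 0 (digit x 0)).val = (f x).appr 1 := by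
        rw [← h0]
        show ((digitN (f x) 0 : ℕ) : ZMod p).val = _
        rw [PadicAux.digitN_zero, ZMod.val_cast_of_lt]
        have := (f x).appr_lt 1
        simpa using this
      rw [hval]
      have key : f x - (((f x).appr 1 : ℕ) : ℤ_[p]) - (x - (x.appr 1 : ℤ_[p]))
          = (f x - (((f x).appr 1 : ℕ) : ℤ_[p])) - (x - ((x.appr 1 : ℕ) : ℤ_[p])) := by
        ring
      rw [key]
      have a1 := PadicAux.appr_dvd (f x) 1
      have a2 := PadicAux.appr_dvd x 1
      rw [pow_one] at a1 a2
      exact dvd_sub a1 a2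
    choose g hg using hD
    refine ⟨g, ?_, ?_⟩
    · apply PadicAux.compat_of_dvd
      intro x y n hdvd
      match n with
      | 0 => simpa using one_dvd _
      | Nat.succ m =>
        have hm1 : (1:ℕ) ≤ m+1 := Nat.succ_le_succ (Nat.zero_le m)
        have hp1 : (p:ℤ_[p])^1 ∣ x - y := dvd_trans (pow_dvd_pow _ hm1) hdvd
        have happr1 : x.appr 1 = y.appr 1 := PadicAux.appr_eq_of_dvd hp1
        have hdig0 : digit x 0 = digit y 0 := by
          show ((digitN x 0 : ℕ) : ZMod p) = ((digitN y 0 : ℕ) : ZMod p)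
          rw [PadicAux.digitN_zero, PadicAux.digitN_zero, happr1]
        have e1 := hg x
        have e2 := hg y
        rw [hdig0, happr1] at e1
        have heq : (p:ℤ_[p]) * (g x - g y) = (f x - f y) - (x - y) := by
          have expand : (p:ℤ_[p]) * (g x - g y) = (p:ℤ_[p]) * g x - (p:ℤ_[p]) * g y := by
            ring
          rw [expand, ← e1, ← e2]
          ring
        have hF := PadicAux.keyF hf hφ hα hm1 hdvd
        rw [← heq] at hF
        have hmul : (p:ℤ_[p]) * (p:ℤ_[p])^(m+1) ∣ (p:ℤ_[p]) * (g x - g y) := by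
          rw [← pow_succ']
          exact hF
        exact (mul_dvd_mul_iff_left hpne).mp hmul
    · intro x
      have := hg x
      linear_combination this
  · rintro ⟨g, hg, hrep⟩
    refine ⟨fun k xb => φ k xb 0, ?_⟩
    intro k hk xb hxb d
    set m : ℕ := xb + d.val * p^k with hm
    have hdvlt : d.val < p := ZMod.val_lt d
    have hmlt : m < p^(k+1) := by
      have h1 : m < (d.val + 1) * p^k := by
        rw [add_mul, one_mul]
        omega
      calc m < (d.val + 1) * p^k := h1
        _ ≤ p * p^k := Nat.mul_le_mul_right _ hdvlt
        _ = p^(k+1) := by rw [pow_succ]; ring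
    set x : ℤ_[p] := (m : ℤ_[p]) with hxdef
    set x' : ℤ_[p] := (xb : ℤ_[p]) with hx'def
    have hxk1 : x.appr (k+1) = m := PadicAux.appr_eq_of hmlt (by simp [hxdef])
    have hxk : x.appr k = xb := by
      apply PadicAux.appr_eq_of hxb
      refine ⟨(d.val : ℤ_[p]), ?_⟩
      rw [hxdef, hm]
      push_cast
      ring
    have hdx : digit x k = d := by
      show ((digitN x k : ℕ) : ZMod p) = d
      have hdig : digitN x k = d.val := by
        show x.appr (k+1) / p^k = d.val
        rw [hxk1, hm, Nat.add_mul_div_right _ _ (PadicAux.pk_pos k),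
          Nat.div_eq_of_lt hxb, Nat.zero_add]
      rw [hdig]
      simp [ZMod.natCast_val, ZMod.cast_id]
    have hxblt1 : xb < p^(k+1) :=
      lt_of_lt_of_le hxb (Nat.pow_le_pow_right hp.1.pos (Nat.le_succ k))
    have hx'k1 : x'.appr (k+1) = xb := PadicAux.appr_eq_of hxblt1 (by simp [hx'def])
    have hx'k : x'.appr k = xb := PadicAux.appr_eq_of hxb (by simp [hx'def])
    have hdx' : digit x' k = 0 := by
      show ((digitN x' k : ℕ) : ZMod p) = 0
      have hdig : digitN x' k = 0 := by
        show x'.appr (k+1) / p^k = 0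
        rw [hx'k1, Nat.div_eq_of_lt hxb]
      rw [hdig]; simp
    have hfx : digit (f x) k = φ k xb d := by rw [hφ x k, hxk, hdx]
    have hfx' : digit (f x') k = φ k xb 0 := by rw [hφ x' k, hx'k, hdx']
    have hxx' : x - x' = (d.val : ℤ_[p]) * (p:ℤ_[p])^k := by
      rw [hxdef, hx'def, hm]
      push_cast
      ring
    have hdvdk : (p:ℤ_[p])^k ∣ x - x' := ⟨(d.val : ℤ_[p]), by rw [hxx']; ring⟩
    have hp1 : (p:ℤ_[p])^1 ∣ x - x' := dvd_trans (pow_dvd_pow _ hk) hdvdk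
    have happr1 : x.appr 1 = x'.appr 1 := PadicAux.appr_eq_of_dvd hp1
    have hdig0 : digit x 0 = digit x' 0 := by
      show ((digitN x 0 : ℕ) : ZMod p) = ((digitN x' 0 : ℕ) : ZMod p)
      rw [PadicAux.digitN_zero, PadicAux.digitN_zero, happr1]
    have hrx := hrep x
    have hrx' := hrep x'
    rw [hdig0, happr1] at hrx
    have hgk : (p:ℤ_[p])^k ∣ g x - g x' := PadicAux.dvd_of_compat hg k hdvdk
    have hmain : (p:ℤ_[p])^(k+1) ∣ (f x - f x') - (x - x') := by
      have e : (f x - f x') - (x - x') = (p:ℤ_[p]) * (g x - g x') := by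
        rw [hrx, hrx']
        ring
      rw [e]
      obtain ⟨c, hc⟩ := hgk
      exact ⟨c, by rw [hc]; ring⟩
    have hfd : (p:ℤ_[p])^k ∣ f x - f x' := PadicAux.dvd_of_compat hf k hdvdk
    have E := PadicAux.keyE hfd
    have comb : (p:ℤ_[p])^(k+1) ∣
        (((digitN (f x) k : ℤ) - digitN (f x') k - d.val : ℤ) : ℤ_[p]) * (p:ℤ_[p])^k := by
      have e2 : (((digitN (f x) k : ℤ) - digitN (f x') k - d.val : ℤ) : ℤ_[p]) * (p:ℤ_[p])^k
          = ((f x - f x') - (x - x'))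
            - ((f x - f x') - ((digitN (f x) k : ℤ_[p]) - digitN (f x') k) * (p:ℤ_[p])^k) := by
        rw [hxx']
        push_cast
        ring
      rw [e2]
      exact dvd_sub hmain E
    have hcancel : (p:ℤ_[p]) ∣
        (((digitN (f x) k : ℤ) - digitN (f x') k - d.val : ℤ) : ℤ_[p]) := by
      have hpkne : ((p:ℤ_[p])^k) ≠ 0 := pow_ne_zero k hpne
      have hmul : (p:ℤ_[p])^k * (p:ℤ_[p]) ∣
          (p:ℤ_[p])^k * ((((digitN (f x) k : ℤ) - digitN (f x') k - d.val : ℤ) : ℤ_[p])) := by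
        rw [← pow_succ]
        obtain ⟨c, hc⟩ := comb
        exact ⟨c, by rw [← hc]; ring⟩
      exact (mul_dvd_mul_iff_left hpkne).mp hmul
    have hz := PadicAux.zmod_of_dvd hcancel
    push_cast at hz
    have hfin : digit (f x) k - digit (f x') k - ((d.val : ℕ) : ZMod p) = 0 := hz
    have hv : ((d.val : ℕ) : ZMod p) = d := by simp [ZMod.natCast_val, ZMod.cast_id]
    rw [hv, hfx, hfx'] at hfin
    linear_combination hfin
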